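/- Let π(z) = (∏_{i=1}^n zᵢ, |z₁|²−|z₂|², …, |z₁|²−|zₙ|²) : ℂ^n → ℂ × ℝ^{n−1} with ∏zᵢ = u + i b₁, and let V_{F₁} be the Hamiltonian vector field of F₁(z) = Im(∏zᵢ) with respect to the standard symplectic form. Then π_*(V_{F₁}) = −χ ∂_u where χ(z) = Σ_{j=1}^n ∏_{i≠j} |zᵢ|²; moreover, in terms of x = |z₁|² and the polynomial P_b, χ = P_b'(x). -/

import Mathlib

/-- Let `π(z) = (∏ zᵢ, |z₁|²−|z₂|², …, |z₁|²−|zₙ|²)` with `∏ zᵢ = u + i b₁`, and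
let `X = V_{F₁}` be the Hamiltonian vector field of `F₁(z) = Im(∏ zᵢ)` with
respect to the standard symplectic form (`ω(v, X z) = dF₁(z) v`). Then
`π_*(V_{F₁}) = −χ ∂_u` where `χ(z) = ∑ⱼ ∏_{i≠j} |zᵢ|²`: the derivative of the
`u`-component along `X` is `−χ` and the derivatives of all other components of
`π` along `X` vanish; moreover `χ = P_b'(x)` at `x = |z₁|²`, where
`P_b(x) = x ∏_{j≥2}(x − bⱼ) − b₁²`. -/
theorem statement19 (n : ℕ)
    (F₁ : (Fin (n + 1) → ℂ) → ℝ) (hF₁ : ∀ z, F₁ z = (∏ i, z i).im)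
    (X : (Fin (n + 1) → ℂ) → (Fin (n + 1) → ℂ))
    (hX : ∀ z v, (∑ k, ((v k).re * (X z k).im - (v k).im * (X z k).re))
      = fderiv ℝ F₁ z v)
    (χ : (Fin (n + 1) → ℂ) → ℝ)
    (hχ : ∀ z, χ z = ∑ j : Fin (n + 1),
      ∏ i ∈ Finset.univ.erase j, Complex.normSq (z i))
    (z : Fin (n + 1) → ℂ) :
    fderiv ℝ (fun z' => (∏ i, z' i).re) z (X z) = - χ z ∧
    fderiv ℝ (fun z' => (∏ i, z' i).im) z (X z) = 0 ∧
    (∀ k : Fin (n + 1), k ≠ 0 →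
      fderiv ℝ (fun z' => Complex.normSq (z' 0) - Complex.normSq (z' k)) z (X z) = 0) ∧
    χ z = deriv (fun x => x * (∏ j ∈ Finset.univ.erase (0 : Fin (n + 1)),
        (x - (Complex.normSq (z 0) - Complex.normSq (z j))))
        - ((∏ i, z i).im) ^ 2) (Complex.normSq (z 0)) := by
  classical
  set w : Fin (n + 1) → ℂ := fun k => ∏ j ∈ Finset.univ.erase k, z j with hw
  -- derivative of the product map
  have hprod : HasFDerivAt (fun z' : Fin (n + 1) → ℂ => ∏ i, z' i)
      (∑ k, w k • (ContinuousLinearMap.proj k : (Fin (n + 1) → ℂ) →L[ℝ] ℂ)) z :=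
    hasFDerivAt_finset_prod
  set L : (Fin (n + 1) → ℂ) →L[ℝ] ℂ :=
    ∑ k, w k • (ContinuousLinearMap.proj k : (Fin (n + 1) → ℂ) →L[ℝ] ℂ) with hL
  have hLapp : ∀ v : Fin (n + 1) → ℂ, L v = ∑ k, w k * v k := by
    intro v
    simp [hL, ContinuousLinearMap.sum_apply, ContinuousLinearMap.smul_apply, smul_eq_mul]
  have hFeq : F₁ = fun z' => (∏ i, z' i).im := funext hF₁
  have hdF : fderiv ℝ F₁ z = Complex.imCLM.comp L := by
    rw [hFeq]
    exact (Complex.imCLM.hasFDerivAt.comp z hprod).fderiv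
  -- components of X z
  have hXim : ∀ k, (X z k).im = (w k).im := by
    intro k
    have h := hX z (Pi.single k 1)
    rw [hdF] at h
    simp only [ContinuousLinearMap.coe_comp', Function.comp_apply, Complex.imCLM_apply,
      hLapp] at h
    rw [Finset.sum_eq_single k (fun j _ hj => by simp [Pi.single_eq_of_ne hj])
      (by simp)] at h
    rw [Finset.sum_eq_single k (fun j _ hj => by simp [Pi.single_eq_of_ne hj])
      (by simp)] at h
    simpa using h
  have hXre : ∀ k, (X z k).re = -(w k).re := by
    intro k
    have h := hX z (Pi.single k Complex.I)
    rw [hdF] at h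
    simp only [ContinuousLinearMap.coe_comp', Function.comp_apply, Complex.imCLM_apply,
      hLapp] at h
    rw [Finset.sum_eq_single k (fun j _ hj => by simp [Pi.single_eq_of_ne hj])
      (by simp)] at h
    rw [Finset.sum_eq_single k (fun j _ hj => by simp [Pi.single_eq_of_ne hj])
      (by simp)] at h
    simp only [Pi.single_eq_same, Complex.mul_im, Complex.I_re, Complex.I_im, mul_zero,
      mul_one, zero_mul, one_mul, add_zero, zero_add, sub_zero, zero_sub] at h
    linarith
  have hzw : ∀ k, z k * w k = ∏ i, z i := by
    intro k
    exact Finset.mul_prod_erase Finset.univ z (Finset.mem_univ k)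
  -- first component
  have h1 : fderiv ℝ (fun z' => (∏ i, z' i).re) z (X z) = - χ z := by
    have hd : fderiv ℝ (fun z' : Fin (n + 1) → ℂ => (∏ i, z' i).re) z =
        Complex.reCLM.comp L := (Complex.reCLM.hasFDerivAt.comp z hprod).fderiv
    rw [hd]
    simp only [ContinuousLinearMap.coe_comp', Function.comp_apply, Complex.reCLM_apply, hLapp]
    rw [Complex.re_sum, hχ]
    rw [← Finset.sum_neg_distrib]
    apply Finset.sum_congr rfl
    intro k _
    have hwk : ∏ i ∈ Finset.univ.erase k, Complex.normSq (z i) = Complex.normSq (w k) := by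
      rw [hw]; exact (map_prod Complex.normSq z _).symm
    rw [hwk]
    simp only [Complex.mul_re, hXre k, hXim k, Complex.normSq_apply]
    ring
  -- second component
  have h2 : fderiv ℝ (fun z' => (∏ i, z' i).im) z (X z) = 0 := by
    have hd : fderiv ℝ (fun z' : Fin (n + 1) → ℂ => (∏ i, z' i).im) z =
        Complex.imCLM.comp L := (Complex.imCLM.hasFDerivAt.comp z hprod).fderiv
    rw [hd]
    simp only [ContinuousLinearMap.coe_comp', Function.comp_apply, Complex.imCLM_apply, hLapp]
    rw [Complex.im_sum]
    apply Finset.sum_eq_zero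
    intro k _
    simp only [Complex.mul_im, hXre k, hXim k]
    ring
  -- other components
  have h3 : ∀ k : Fin (n + 1), k ≠ 0 →
      fderiv ℝ (fun z' => Complex.normSq (z' 0) - Complex.normSq (z' k)) z (X z) = 0 := by
    intro k hk
    have hns : ∀ j : Fin (n + 1), HasFDerivAt
        (fun z' : Fin (n + 1) → ℂ => Complex.normSq (z' j))
        ((2 * (z j).re) • (Complex.reCLM.comp
            (ContinuousLinearMap.proj j : (Fin (n + 1) → ℂ) →L[ℝ] ℂ)) +
         (2 * (z j).im) • (Complex.imCLM.comp
            (ContinuousLinearMap.proj j : (Fin (n + 1) → ℂ) →L[ℝ] ℂ))) z := by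
      intro j
      have hR : HasFDerivAt (fun z' : Fin (n + 1) → ℂ => (z' j).re)
          (Complex.reCLM.comp (ContinuousLinearMap.proj j : (Fin (n + 1) → ℂ) →L[ℝ] ℂ)) z :=
        (Complex.reCLM.comp
          (ContinuousLinearMap.proj j : (Fin (n + 1) → ℂ) →L[ℝ] ℂ)).hasFDerivAt
      have hI : HasFDerivAt (fun z' : Fin (n + 1) → ℂ => (z' j).im)
          (Complex.imCLM.comp (ContinuousLinearMap.proj j : (Fin (n + 1) → ℂ) →L[ℝ] ℂ)) z :=
        (Complex.imCLM.comp
          (ContinuousLinearMap.proj j : (Fin (n + 1) → ℂ) →L[ℝ] ℂ)).hasFDerivAt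
      have hsum := (hR.fun_mul hR).fun_add (hI.fun_mul hI)
      have heq : (fun z' : Fin (n + 1) → ℂ => (z' j).re * (z' j).re + (z' j).im * (z' j).im)
          = fun z' => Complex.normSq (z' j) := by
        funext z'; rw [Complex.normSq_apply]
      rw [heq] at hsum
      refine hsum.congr_fderiv ?_
      ext v
      simp only [ContinuousLinearMap.add_apply, ContinuousLinearMap.smul_apply,
        ContinuousLinearMap.coe_comp', Function.comp_apply, Complex.reCLM_apply,
        Complex.imCLM_apply, ContinuousLinearMap.proj_apply, smul_eq_mul]
      ring
    have hd := ((hns 0).fun_sub (hns k)).fderiv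
    rw [hd]
    simp only [ContinuousLinearMap.coe_sub', Pi.sub_apply, ContinuousLinearMap.add_apply,
      ContinuousLinearMap.smul_apply, ContinuousLinearMap.coe_comp', Function.comp_apply,
      Complex.reCLM_apply, Complex.imCLM_apply, ContinuousLinearMap.proj_apply, smul_eq_mul]
    have e0 : (z 0).re * (X z 0).re + (z 0).im * (X z 0).im = -(∏ i, z i).re := by
      rw [hXre 0, hXim 0, ← hzw 0]
      simp only [Complex.mul_re]; ring
    have ek : (z k).re * (X z k).re + (z k).im * (X z k).im = -(∏ i, z i).re := by
      rw [hXre k, hXim k, ← hzw k]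
      simp only [Complex.mul_re]; ring
    linarith
  refine ⟨h1, h2, h3, ?_⟩
  -- the polynomial identity
  have hP : HasDerivAt (fun x : ℝ => ∏ j ∈ Finset.univ.erase (0 : Fin (n + 1)),
        (x - (Complex.normSq (z 0) - Complex.normSq (z j))))
      (∑ j ∈ Finset.univ.erase (0 : Fin (n + 1)),
        ∏ i ∈ (Finset.univ.erase (0 : Fin (n + 1))).erase j,
          (Complex.normSq (z 0) - (Complex.normSq (z 0) - Complex.normSq (z i))))
      (Complex.normSq (z 0)) := by
    have h := HasDerivAt.fun_finsetProd (u := Finset.univ.erase (0 : Fin (n + 1)))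
      (f := fun j x => x - (Complex.normSq (z 0) - Complex.normSq (z j)))
      (f' := fun _ => 1) (x := Complex.normSq (z 0))
      (fun i _ => (hasDerivAt_id _).sub_const _)
    simpa using h
  have hq : HasDerivAt (fun x : ℝ => x * (∏ j ∈ Finset.univ.erase (0 : Fin (n + 1)),
        (x - (Complex.normSq (z 0) - Complex.normSq (z j)))) - ((∏ i, z i).im) ^ 2)
      (1 * (∏ j ∈ Finset.univ.erase (0 : Fin (n + 1)),
        (Complex.normSq (z 0) - (Complex.normSq (z 0) - Complex.normSq (z j)))) +
       Complex.normSq (z 0) * ∑ j ∈ Finset.univ.erase (0 : Fin (n + 1)),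
        ∏ i ∈ (Finset.univ.erase (0 : Fin (n + 1))).erase j,
          (Complex.normSq (z 0) - (Complex.normSq (z 0) - Complex.normSq (z i))))
      (Complex.normSq (z 0)) := by
    exact ((hasDerivAt_id' _).mul hP).sub_const _
  rw [hq.deriv, hχ]
  have hfac : ∀ j : Fin (n + 1),
      Complex.normSq (z 0) - (Complex.normSq (z 0) - Complex.normSq (z j))
        = Complex.normSq (z j) := fun j => by ring
  simp only [hfac, one_mul]
  rw [← Finset.add_sum_erase _ _ (Finset.mem_univ (0 : Fin (n + 1)))]
  congr 1
  rw [Finset.mul_sum]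
  apply Finset.sum_congr rfl
  intro j hj
  have hj0 : j ≠ 0 := Finset.ne_of_mem_erase hj
  have hins : Finset.univ.erase j = insert 0 ((Finset.univ.erase j).erase 0) := by
    rw [Finset.insert_erase (Finset.mem_erase.mpr ⟨Ne.symm hj0, Finset.mem_univ 0⟩)]
  rw [hins, Finset.prod_insert (Finset.notMem_erase _ _), Finset.erase_right_comm]
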